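/- arXiv:2104.03870 — 2 statements merged into one kernel-verified Lean document; each statement's English description precedes it below -/
import Mathlib

section
/- The cocomposition formula is well defined on Surj_R: if the formula defining Δ_v is applied to a degenerate sequence u in S ⊔_v T (extending it R-linearly to the free module on all sequences, with the convention that terms having a degenerate factor are 0), then every term vanishes — in each summand at least one of the two tensor factors is a degenerate sequence. Consequently Δ_v induces a well-defined R-linear map Δ_v : Surj_R(S ⊔_v T) → Surj_R(S) ⊗_R Surj_R(T) on the quotient by degenerate sequences. -/
namespace SurjectionsCooperad

open Finsupp TensorProduct

def Nondeg {S : Type} [Fintype S] [DecidableEq S] (l : List S) : Prop :=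
  (∀ x : S, x ∈ l) ∧ l.Chain' (· ≠ ·)

instance {S : Type} [Fintype S] [DecidableEq S] (l : List S) : Decidable (Nondeg l) := by
  unfold Nondeg List.Chain'; infer_instance

def IsCaesura {S : Type} [DecidableEq S] (l : List S) (β : ℕ) : Prop :=
  ∃ x ∈ l.drop (β + 1), l[β]? = some x

instance {S : Type} [DecidableEq S] (l : List S) (β : ℕ) : Decidable (IsCaesura l β) := by
  unfold IsCaesura; infer_instance

def cBefore {S : Type} [DecidableEq S] (l : List S) (β : ℕ) : ℕ :=
  ((Finset.range β).filter fun γ => IsCaesura l γ).card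

def prevSet {S : Type} [DecidableEq S] (l : List S) (β : ℕ) : Finset ℕ :=
  (Finset.range β).filter fun γ => l[γ]? = l[β]?

def entrySign {S : Type} [DecidableEq S] (l : List S) (β : ℕ) : ℤ :=
  if IsCaesura l β then (-1) ^ cBefore l β
  else if h : (prevSet l β).Nonempty then -((-1) ^ cBefore l ((prevSet l β).max' h)) else 0

variable (R : Type) [CommRing R]

/-- Shortcut instance (definitionally the standard one) to help elaboration of `0`
in tensor products. -/
noncomputable instance instZeroTensor (M N : Type) [AddCommMonoid M] [Module R M]
    [AddCommMonoid N] [Module R N] : Zero (TensorProduct R M N) :=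
  (inferInstance : AddCommMonoid (TensorProduct R M N)).toZero

/-- Nondegenerate sequences in `S` (of arbitrary degree). -/
def NSeq (S : Type) [Fintype S] [DecidableEq S] : Type := {l : List S // Nondeg l}

/-- The total surjections complex: the free `R`-module on all nondegenerate sequences,
graded by `length − card S`. -/
abbrev Surj (S : Type) [Fintype S] [DecidableEq S] : Type := NSeq S →₀ R

noncomputable def term (S : Type) [Fintype S] [DecidableEq S] (l : List S) : Surj R S :=
  if h : Nondeg l then Finsupp.single ⟨l, h⟩ 1 else 0

/-- The differential of the surjections complex. -/
noncomputable def del (S : Type) [Fintype S] [DecidableEq S] : Surj R S →ₗ[R] Surj R S :=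
  Finsupp.lift (Surj R S) R (NSeq S) fun u =>
    ∑ β ∈ Finset.range u.val.length, entrySign u.val β • term R S (u.val.eraseIdx β)

/-- Relabelling along a map of labels. -/
noncomputable def relabel (S : Type) [Fintype S] [DecidableEq S] (σ : S → S) :
    Surj R S →ₗ[R] Surj R S :=
  Finsupp.lift (Surj R S) R (NSeq S) fun u => term R S (u.val.map σ)

/-- Augmentation: sends every degree-0 nondegenerate sequence to `1` and all
higher-degree ones to `0`. -/
noncomputable def aug (S : Type) [Fintype S] [DecidableEq S] : Surj R S →ₗ[R] R :=
  Finsupp.lift R R (NSeq S) fun u => if u.val.length = Fintype.card S then 1 else 0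

/-- The sign operator `x ↦ (−1)^{|x|} x` on the surjections complex. -/
noncomputable def signId (S : Type) [Fintype S] [DecidableEq S] : Surj R S →ₗ[R] Surj R S :=
  Finsupp.lift (Surj R S) R (NSeq S) fun u =>
    ((-1 : ℤ) ^ (u.val.length - Fintype.card S)) • Finsupp.single u 1

/-- The differential of the tensor product: `∂(x ⊗ y) = ∂x ⊗ y + (−1)^{|x|} x ⊗ ∂y`. -/
noncomputable def delTensor (S T : Type) [Fintype S] [DecidableEq S] [Fintype T] [DecidableEq T] :
    Surj R S ⊗[R] Surj R T →ₗ[R] Surj R S ⊗[R] Surj R T :=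
  TensorProduct.map (del R S) LinearMap.id + TensorProduct.map (signId R S) (del R T)

section Glue

variable {S T W : Type}

/-- The subsequence of the entries of `l` lying in `T`. -/
def tPart (j : W → S ⊕ T) (l : List W) : List T :=
  l.filterMap fun w => (j w).getRight?

/-- `wSeq j v l i` replaces the first `i` entries of `l` lying in `T` by `v`,
deletes the remaining entries lying in `T`, and keeps the values of entries in `S`. -/
def wSeq (j : W → S ⊕ T) (v : S) : List W → ℕ → List S
  | [], _ => []
  | w :: rest, i =>
    match j w with
    | Sum.inl s => s :: wSeq j v rest i
    | Sum.inr _ =>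
      match i with
      | 0 => wSeq j v rest 0
      | i' + 1 => v :: wSeq j v rest i'

/-- The number of `T`-entries among the first `β+1` entries of `l`. -/
def tOcc (j : W → S ⊕ T) (l : List W) (β : ℕ) : ℕ :=
  ((l.take (β + 1)).filterMap fun w => (j w).getRight?).length

/-- The sign `±_{||}` of the canonical bijection `Caes(u) ≅ Caes(w_i) ⋆ Caes(u')`
for the cut at the `i`-th `T`-entry: `(−1)` to the number of pairs of caesuras of `u`
which are interchanged, namely pairs `(β,γ)` with `β < γ`, the entry at `β` lying in
`T` with occurrence number `≥ i` (hence going to the second factor) and the entry at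
`γ` lying in `S` (hence going to the first factor). -/
def cutSign [DecidableEq W] (j : W → S ⊕ T) (l : List W) (i : ℕ) : ℤ :=
  (-1) ^ ((Finset.range l.length ×ˢ Finset.range l.length).filter fun p =>
      p.1 < p.2 ∧ IsCaesura l p.1 ∧ IsCaesura l p.2 ∧
      (l[p.1]?.map fun w => (j w).isRight) = some true ∧ i ≤ tOcc j l p.1 ∧
      (l[p.2]?.map fun w => (j w).isLeft) = some true).card

/-- `j : W → S ⊕ T` exhibits `W` as `S ⊔_v T = (S ∖ {v}) ⊔ T`. -/
def GlueData (j : W → S ⊕ T) (v : S) : Prop :=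
  Function.Injective j ∧ (∀ s : S, s ≠ v ↔ ∃ w, j w = Sum.inl s) ∧ ∀ t : T, ∃ w, j w = Sum.inr t

variable [Fintype S] [DecidableEq S] [Fintype T] [DecidableEq T] [Fintype W] [DecidableEq W]

/-- The cocomposition `Δ_v : Surj_R(S ⊔_v T) → Surj_R(S) ⊗_R Surj_R(T)`. -/
noncomputable def cocomp (j : W → S ⊕ T) (v : S) :
    Surj R W →ₗ[R] Surj R S ⊗[R] Surj R T :=
  Finsupp.lift (Surj R S ⊗[R] Surj R T) R (NSeq W) fun u =>
    ∑ i ∈ Finset.range (tPart j u.val).length,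
      cutSign j u.val (i + 1) •
        (term R S (wSeq j v u.val (i + 1)) ⊗ₜ[R] term R T ((tPart j u.val).drop i))

end Glue


section Aux

variable {S T W : Type}

lemma wSeq_append (j : W → S ⊕ T) (v : S) (l1 l2 : List W) (i : ℕ) :
    wSeq j v (l1 ++ l2) i = wSeq j v l1 i ++ wSeq j v l2 (i - (tPart j l1).length) := by
  induction l1 generalizing i with
  | nil => simp [wSeq, tPart]
  | cons w rest ih =>
    cases hjw : j w with
    | inl s =>
      simp [wSeq, hjw, tPart, List.filterMap_cons, ih]
    | inr t =>
      cases i with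
      | zero => simp [wSeq, hjw, tPart, List.filterMap_cons, ih]
      | succ i' =>
        simp [wSeq, hjw, tPart, List.filterMap_cons, ih, Nat.succ_sub_succ]

lemma mem_wSeq {j : W → S ⊕ T} {v : S} {l : List W} {i : ℕ} {x : S}
    (hx : x ∈ wSeq j v l i) : x = v ∨ ∃ w ∈ l, j w = Sum.inl x := by
  induction l generalizing i with
  | nil => simp [wSeq] at hx
  | cons w rest ih =>
    cases hjw : j w with
    | inl s =>
      simp only [wSeq, hjw] at hx
      rcases List.mem_cons.mp hx with h | h
      · exact Or.inr ⟨w, List.mem_cons_self, by rw [hjw, h]⟩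
      · rcases ih h with h' | ⟨w', hw', hjw'⟩
        · exact Or.inl h'
        · exact Or.inr ⟨w', List.mem_cons_of_mem _ hw', hjw'⟩
    | inr t =>
      cases i with
      | zero =>
        simp only [wSeq, hjw] at hx
        rcases ih hx with h' | ⟨w', hw', hjw'⟩
        · exact Or.inl h'
        · exact Or.inr ⟨w', List.mem_cons_of_mem _ hw', hjw'⟩
      | succ i' =>
        simp only [wSeq, hjw] at hx
        rcases List.mem_cons.mp hx with h | h
        · exact Or.inl h
        · rcases ih h with h' | ⟨w', hw', hjw'⟩
          · exact Or.inl h'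
          · exact Or.inr ⟨w', List.mem_cons_of_mem _ hw', hjw'⟩

lemma exists_adj_of_not_chain' {α : Type*} {l : List α} (h : ¬ l.Chain' (· ≠ ·)) :
    ∃ l1 : List α, ∃ x : α, ∃ l2 : List α, l = l1 ++ x :: x :: l2 := by
  induction l with
  | nil => simp [List.Chain'] at h
  | cons a rest ih =>
    cases rest with
    | nil => simp [List.Chain'] at h
    | cons b rest' =>
      rw [List.Chain', List.isChain_cons_cons] at h
      push_neg at h
      by_cases hab : a = b
      · exact ⟨[], a, rest', by simp [hab]⟩
      · obtain ⟨l1, x, l2, hl⟩ := ih (h hab)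
        exact ⟨a :: l1, x, l2, by simp [hl]⟩

lemma not_chain'_adj {α : Type*} (A B : List α) (x : α) :
    ¬ (A ++ x :: x :: B).Chain' (· ≠ ·) := by
  intro h
  have := (List.isChain_append.mp h).2.1
  rw [List.isChain_cons_cons] at this
  exact this.1 rfl

lemma not_nondeg_adj {S' : Type} [Fintype S'] [DecidableEq S'] (A B : List S') (x : S') :
    ¬ Nondeg (A ++ x :: x :: B) := fun h => not_chain'_adj A B x h.2

end Aux

/-- The cocomposition formula is well defined: applied to a
*degenerate* sequence `u` in `S ⊔_v T`, every term of the formula vanishes — in each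
summand at least one of the two tensor factors is a degenerate sequence.
Consequently `Δ_v` induces a well-defined `R`-linear map
`Surj_R(S ⊔_v T) → Surj_R(S) ⊗_R Surj_R(T)` on the quotient by degenerate sequences
(namely, the linear map `cocomp` above, defined on the free module on nondegenerate
sequences). -/
theorem cocomp_formula_vanishes_on_degenerate
    (R : Type) [CommRing R] (S T W : Type)
    [Fintype S] [DecidableEq S] [Nonempty S] [Fintype T] [DecidableEq T] [Nonempty T]
    [Fintype W] [DecidableEq W]
    (v : S) (j : W → S ⊕ T) (hj : GlueData j v)
    (u : List W) (hu : ¬ Nondeg u) :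
    (∀ i < (tPart j u).length, ¬ Nondeg (wSeq j v u (i + 1)) ∨ ¬ Nondeg ((tPart j u).drop i)) ∧
    (∀ i ∈ Finset.range (tPart j u).length,
      cutSign j u (i + 1) •
        (term R S (wSeq j v u (i + 1)) ⊗ₜ[R] term R T ((tPart j u).drop i)) = 0) := by
  have main : ∀ i < (tPart j u).length,
      ¬ Nondeg (wSeq j v u (i + 1)) ∨ ¬ Nondeg ((tPart j u).drop i) := by
    intro i hi
    rw [Nondeg, not_and_or] at hu
    rcases hu with hu | hu
    · -- some element of W is missing from u
      push_neg at hu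
      obtain ⟨w0, hw0⟩ := hu
      cases hjw0 : j w0 with
      | inl s =>
        left
        intro hN
        have hs : s ∈ wSeq j v u (i + 1) := hN.1 s
        have hsv : s ≠ v := (hj.2.1 s).mpr ⟨w0, hjw0⟩
        rcases mem_wSeq hs with h | ⟨w', hw', hjw'⟩
        · exact hsv h
        · have : w' = w0 := hj.1 (by rw [hjw', hjw0])
          exact hw0 (this ▸ hw')
      | inr t =>
        right
        intro hN
        have ht : t ∈ (tPart j u).drop i := hN.1 t
        have ht' : t ∈ tPart j u := List.mem_of_mem_drop ht
        obtain ⟨w', hw', hjw'⟩ := List.mem_filterMap.mp ht'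
        have hjw'' : j w' = Sum.inr t := by
          cases h : j w' <;> rw [h] at hjw' <;> simp [Sum.getRight?] at hjw'
          rw [hjw']
        have : w' = w0 := hj.1 (by rw [hjw'', hjw0])
        exact hw0 (this ▸ hw')
    · -- u has two adjacent equal entries
      obtain ⟨l1, w, l2, hl⟩ := exists_adj_of_not_chain' hu
      subst hl
      cases hjw : j w with
      | inl s =>
        left
        rw [wSeq_append]
        have h2 : wSeq j v (w :: w :: l2) ((i+1) - (tPart j l1).length)
            = s :: s :: wSeq j v l2 ((i+1) - (tPart j l1).length) := by
          simp [wSeq, hjw]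
        rw [h2]
        exact not_nondeg_adj _ _ s
      | inr t =>
        have htp : tPart j (l1 ++ w :: w :: l2)
            = tPart j l1 ++ t :: t :: tPart j l2 := by
          simp [tPart, List.filterMap_append, List.filterMap_cons, hjw]
        set q := (tPart j l1).length with hq
        by_cases hiq : i ≤ q
        · right
          rw [htp, List.drop_append_of_le_length hiq]
          exact not_nondeg_adj _ _ t
        · left
          push_neg at hiq
          obtain ⟨m, hm⟩ : ∃ m, (i + 1) - q = m + 2 := by
            refine ⟨i - q - 1, ?_⟩
            omega
          rw [wSeq_append, ← hq, hm]
          have h2 : wSeq j v (w :: w :: l2) (m + 2) = v :: v :: wSeq j v l2 m := by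
            simp [wSeq, hjw]
          rw [h2]
          exact not_nondeg_adj _ _ v
  refine ⟨main, ?_⟩
  intro i hi
  rcases main i (Finset.mem_range.mp hi) with h | h
  · simp only [term]; rw [dif_neg h, TensorProduct.zero_tmul, smul_zero]
  · simp only [term]; rw [dif_neg h, TensorProduct.tmul_zero, smul_zero]
end SurjectionsCooperad
end

section
/- Equivariance of the surjections cocomposition: let R be a commutative ring, S, T nonempty finite sets and v ∈ S. For every bijection σ of S fixing v and every bijection τ of T, letting σ ⊔_v τ denote the induced bijection of S ⊔_v T and letting bijections act on Surj_R by relabelling the entries of sequences, one has Δ_v ∘ (σ ⊔_v τ)_* = (σ_* ⊗ τ_*) ∘ Δ_v as maps Surj_R(S ⊔_v T) → Surj_R(S) ⊗_R Surj_R(T). In other words, Δ_v is equivariant with respect to the subgroup Aut(S ∖ {v}) × Aut(T) ⊆ Aut(S ⊔_v T). -/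
namespace SurjectionsCooperad

open Finsupp TensorProduct

variable (R : Type) [CommRing R]

section Aux

variable {S T W : Type}

lemma tPart_map (σ : S → S) (τ : T → T) (j : W → S ⊕ T) (ρ : W → W)
    (hρ : ∀ x, j (ρ x) = Sum.map σ τ (j x)) (l : List W) :
    tPart j (l.map ρ) = (tPart j l).map τ := by
  unfold tPart
  rw [List.filterMap_map, List.map_filterMap]
  congr 1; funext w
  rw [Function.comp_apply, hρ]
  cases j w <;> simp

lemma wSeq_map (σ : S → S) (τ : T → T) (j : W → S ⊕ T) (ρ : W → W) (v : S)
    (hσ : σ v = v) (hρ : ∀ x, j (ρ x) = Sum.map σ τ (j x)) :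
    ∀ (l : List W) (i : ℕ), wSeq j v (l.map ρ) i = (wSeq j v l i).map σ
  | [], _ => rfl
  | w :: rest, i => by
    simp only [List.map_cons, wSeq, hρ w]
    cases hjw : j w with
    | inl s => simp [wSeq_map σ τ j ρ v hσ hρ rest i]
    | inr t =>
      cases i with
      | zero => simp [wSeq_map σ τ j ρ v hσ hρ rest 0]
      | succ i' => simp [hσ, wSeq_map σ τ j ρ v hσ hρ rest i']

lemma tOcc_map (σ : S → S) (τ : T → T) (j : W → S ⊕ T) (ρ : W → W)
    (hρ : ∀ x, j (ρ x) = Sum.map σ τ (j x)) (l : List W) (β : ℕ) :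
    tOcc j (l.map ρ) β = tOcc j l β := by
  unfold tOcc
  rw [← List.map_take, List.filterMap_map]
  have : ((fun w => (j w).getRight?) ∘ ρ) = fun w => ((j w).getRight?).map τ := by
    funext w; rw [Function.comp_apply, hρ]; cases j w <;> simp
  rw [this, ← List.map_filterMap, List.length_map]

lemma isCaesura_map {W : Type} [DecidableEq W] (ρ : W → W) (hinj : Function.Injective ρ)
    (l : List W) (β : ℕ) : IsCaesura (l.map ρ) β ↔ IsCaesura l β := by
  unfold IsCaesura
  rw [← List.map_drop, List.getElem?_map]
  constructor
  · rintro ⟨x, hx, hx2⟩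
    rw [List.mem_map] at hx
    obtain ⟨y, hy, rfl⟩ := hx
    cases h : l[β]? with
    | none => simp [h] at hx2
    | some z =>
      rw [h] at hx2
      have hzy : z = y := hinj (by simpa using hx2)
      exact ⟨y, hy, by rw [hzy]⟩
  · rintro ⟨x, hx, hx2⟩
    exact ⟨ρ x, List.mem_map_of_mem hx, by rw [hx2]; rfl⟩

lemma cutSign_map [DecidableEq W] (σ : S → S) (τ : T → T) (j : W → S ⊕ T) (ρ : W → W)
    (hinj : Function.Injective ρ) (hρ : ∀ x, j (ρ x) = Sum.map σ τ (j x))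
    (l : List W) (i : ℕ) : cutSign j (l.map ρ) i = cutSign j l i := by
  unfold cutSign
  rw [List.length_map]
  congr 2
  apply Finset.filter_congr
  intro p _
  have hR : ∀ β : ℕ, ((l.map ρ)[β]?.map fun w => (j w).isRight)
      = (l[β]?.map fun w => (j w).isRight) := by
    intro β
    rw [List.getElem?_map, Option.map_map]
    congr 1; funext w
    rw [Function.comp_apply, hρ, Sum.isRight_map]
  have hL : ∀ β : ℕ, ((l.map ρ)[β]?.map fun w => (j w).isLeft)
      = (l[β]?.map fun w => (j w).isLeft) := by
    intro β
    rw [List.getElem?_map, Option.map_map]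
    congr 1; funext w
    rw [Function.comp_apply, hρ, Sum.isLeft_map]
  rw [isCaesura_map ρ hinj, isCaesura_map ρ hinj, tOcc_map σ τ j ρ hρ, hR, hL]

variable [Fintype S] [DecidableEq S]

lemma nondeg_map (σ : S → S) (hbij : Function.Bijective σ) (l : List S) :
    Nondeg (l.map σ) ↔ Nondeg l := by
  unfold Nondeg List.Chain'
  rw [List.isChain_map]
  constructor
  · rintro ⟨h1, h2⟩
    refine ⟨fun x => ?_, ?_⟩
    · have := h1 (σ x)
      rw [List.mem_map] at this
      obtain ⟨y, hy, hyx⟩ := this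
      rwa [hbij.1 hyx] at hy
    · exact List.IsChain.imp (fun a b h => fun hab => h (by rw [hab])) h2
  · rintro ⟨h1, h2⟩
    refine ⟨fun x => ?_, ?_⟩
    · obtain ⟨y, rfl⟩ := hbij.2 x
      exact List.mem_map_of_mem (h1 y)
    · exact List.IsChain.imp (fun a b h => fun hab => h (hbij.1 hab)) h2

variable (R : Type) [CommRing R]

lemma relabel_single (σ : S → S) (u : NSeq S) (r : R) :
    relabel R S σ (Finsupp.single u r) = r • term R S (u.val.map σ) := by
  simp [relabel, Finsupp.lift_apply, Finsupp.sum_single_index]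

lemma relabel_term (σ : S → S) (hbij : Function.Bijective σ) (l : List S) :
    relabel R S σ (term R S l) = term R S (l.map σ) := by
  by_cases h : Nondeg l
  · rw [show term R S l = Finsupp.single ⟨l, h⟩ 1 from dif_pos h]
    exact (relabel_single R σ ⟨l, h⟩ 1).trans (one_smul _ _)
  · rw [show term R S l = 0 from dif_neg h, map_zero, eq_comm]
    exact dif_neg fun hc => h ((nondeg_map σ hbij l).mp hc)

end Aux

section Aux2
variable {S T W : Type}
variable [Fintype S] [DecidableEq S] [Fintype T] [DecidableEq T] [Fintype W] [DecidableEq W]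
variable (R : Type) [CommRing R]

lemma cocomp_single (j : W → S ⊕ T) (v : S) (u : NSeq W) (r : R) :
    cocomp R j v (Finsupp.single u r) =
      r • ∑ i ∈ Finset.range (tPart j u.val).length,
        cutSign j u.val (i + 1) •
          (term R S (wSeq j v u.val (i + 1)) ⊗ₜ[R] term R T ((tPart j u.val).drop i)) := by
  simp [cocomp, Finsupp.lift_apply, Finsupp.sum_single_index]

lemma cocomp_term (j : W → S ⊕ T) (v : S) (l : List W) :
    cocomp R j v (term R W l) =
      if Nondeg l then
        ∑ i ∈ Finset.range (tPart j l).length,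
          cutSign j l (i + 1) •
            (term R S (wSeq j v l (i + 1)) ⊗ₜ[R] term R T ((tPart j l).drop i))
      else 0 := by
  by_cases h : Nondeg l
  · rw [show term R W l = Finsupp.single ⟨l, h⟩ 1 from dif_pos h, if_pos h]
    exact (cocomp_single R j v ⟨l, h⟩ 1).trans (one_smul _ _)
  · rw [show term R W l = 0 from dif_neg h, if_neg h, map_zero]

end Aux2

/-- Equivariance of the cocomposition: for bijections `σ` of `S`
fixing `v` and `τ` of `T`, and `ρ` the induced bijection `σ ⊔_v τ` of `W = S ⊔_v T`
(characterised by `j ∘ ρ = (σ ⊕ τ) ∘ j`), one has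
`Δ_v ∘ (σ ⊔_v τ)_* = (σ_* ⊗ τ_*) ∘ Δ_v`, where bijections act on `Surj_R` by
relabelling the entries of sequences.  In other words, `Δ_v` is equivariant with
respect to `Aut(S ∖ {v}) × Aut(T) ⊆ Aut(S ⊔_v T)`. -/
theorem cocomp_equivariant
    (R : Type) [CommRing R] (S T W : Type)
    [Fintype S] [DecidableEq S] [Nonempty S] [Fintype T] [DecidableEq T] [Nonempty T]
    [Fintype W] [DecidableEq W]
    (v : S) (j : W → S ⊕ T) (hj : GlueData j v)
    (σ : Equiv.Perm S) (hσ : σ v = v) (τ : Equiv.Perm T) (ρ : Equiv.Perm W)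
    (hρ : ∀ x : W, j (ρ x) = Sum.map σ τ (j x)) :
    (cocomp R j v).comp (relabel R W ρ)
      = (TensorProduct.map (relabel R S σ) (relabel R T τ)).comp (cocomp R j v) := by
  apply Finsupp.lhom_ext
  intro u r
  rw [LinearMap.comp_apply, LinearMap.comp_apply, relabel_single, map_smul, cocomp_term,
    cocomp_single, map_smul]
  congr 1
  rw [if_pos ((nondeg_map (⇑ρ) ρ.bijective u.val).mpr u.2)]
  rw [tPart_map σ τ j ρ hρ, List.length_map]
  rw [map_sum]
  apply Finset.sum_congr rfl
  intro i _
  rw [map_zsmul, cutSign_map σ τ j ρ ρ.injective hρ, TensorProduct.map_tmul,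
    wSeq_map σ τ j ρ v hσ hρ, ← List.map_drop,
    relabel_term R (⇑σ) σ.bijective, relabel_term R (⇑τ) τ.bijective]
end SurjectionsCooperad
end
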